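/- For a polygon dissection R of the (n+3)-gon and the associated generalised frieze values m_R, each difference m_R(i−1,j−1)·m_R(i,j) − m_R(i−1,j)·m_R(i,j−1) equals 0 or 1, where a factor m_R(a,b) is interpreted as 1 if a and b are neighbouring vertices (i.e. the corresponding object is zero). -/

import Mathlib

/-- `x` lies strictly between `a` and `b` in the cyclic order on the vertices
`ZMod m` of a convex `m`-gon. -/
def StrBtw (m : ℕ) [NeZero m] (a x b : ZMod m) : Prop :=
  (x - a).val ≠ 0 ∧ (x - a).val < (b - a).val

/-- Two chords of the `m`-gon (given by their pairs of endpoints) cross: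
the endpoints of one strictly separate the endpoints of the other. -/
def Crosses (m : ℕ) [NeZero m] (d d' : ZMod m × ZMod m) : Prop :=
  (StrBtw m d.1 d'.1 d.2 ∧ StrBtw m d.2 d'.2 d.1) ∨
  (StrBtw m d.1 d'.2 d.2 ∧ StrBtw m d.2 d'.1 d.1)

section Helpers
variable {N : ℕ} [NeZero N]

instance (a x b : ZMod N) : Decidable (StrBtw N a x b) := by
  unfold StrBtw; infer_instance

instance (d d' : ZMod N × ZMod N) : Decidable (Crosses N d d') := by
  unfold Crosses; infer_instance

lemma subval (c s t : ZMod N) :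
    ((t - c).val ≤ (s - c).val ∧ (s - t).val = (s - c).val - (t - c).val) ∨
    ((s - c).val < (t - c).val ∧ (s - t).val + (t - c).val = N + (s - c).val) := by
  have hst : s - t = (s - c) - (t - c) := by ring
  rw [hst]
  set x := s - c
  set y := t - c
  rcases le_or_gt y.val x.val with h | h
  · left
    refine ⟨h, ?_⟩
    have hxy : x - y = ((x.val - y.val : ℕ) : ZMod N) := by
      rw [Nat.cast_sub h, ZMod.natCast_val, ZMod.natCast_val, ZMod.cast_id, ZMod.cast_id]
    rw [hxy, ZMod.val_cast_of_lt (by have := ZMod.val_lt x; omega)]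
  · right
    refine ⟨h, ?_⟩
    have hxy : x - y = ((N + x.val - y.val : ℕ) : ZMod N) := by
      rw [Nat.cast_sub (by have := ZMod.val_lt y; omega), Nat.cast_add,
        ZMod.natCast_self, ZMod.natCast_val, ZMod.natCast_val, ZMod.cast_id, ZMod.cast_id,
        zero_add]
    rw [hxy, ZMod.val_cast_of_lt (by have := ZMod.val_lt x; omega)]
    have := ZMod.val_lt y; omega

def between (s t r : ℕ) : Prop := (s < t ∧ t < r) ∨ (s < t ∧ r < s) ∨ (t < r ∧ r < s)

lemma strbtw_coord (c a x b : ZMod N) :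
    StrBtw N a x b ↔ between ((a - c).val) ((x - c).val) ((b - c).val) := by
  have h1 := subval c x a
  have h2 := subval c b a
  have v1 := ZMod.val_lt (a - c)
  have v2 := ZMod.val_lt (x - c)
  have v3 := ZMod.val_lt (b - c)
  unfold StrBtw between
  omega

lemma crosses_coord (c x y u w : ZMod N) :
    Crosses N (x, y) (u, w) ↔
      ((between ((x - c).val) ((u - c).val) ((y - c).val) ∧
        between ((y - c).val) ((w - c).val) ((x - c).val)) ∨
       (between ((x - c).val) ((w - c).val) ((y - c).val) ∧
        between ((y - c).val) ((u - c).val) ((x - c).val))) := by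
  unfold Crosses
  rw [strbtw_coord c, strbtw_coord c, strbtw_coord c, strbtw_coord c]

lemma crosses_symm_pair (x y : ZMod N) (d : ZMod N × ZMod N) :
    Crosses N (x, y) d ↔ Crosses N (y, x) d := by
  unfold Crosses; dsimp only; tauto

lemma crosses_symm2 (x y u w : ZMod N) :
    Crosses N (x, y) (u, w) ↔ Crosses N (x, y) (w, u) := by
  unfold Crosses; dsimp only; tauto

lemma val_sub_inj (c x y : ZMod N) (h : (x - c).val = (y - c).val) : x = y := by
  have h2 : x - c = y - c := ZMod.val_injective N h
  have : x - c + c = y - c + c := by rw [h2]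
  simpa [sub_add_cancel_right] using by linear_combination h2

lemma noncross_edge (hN : 1 < N) (x : ZMod N) (d : ZMod N × ZMod N) :
    ¬ Crosses N (x, x + 1) d := by
  obtain ⟨u, w⟩ := d
  rw [crosses_coord x]
  have h1 : (x - x).val = 0 := by rw [sub_self]; exact ZMod.val_zero
  have h2 : (x + 1 - x).val = 1 := by
    have hx : x + 1 - x = 1 := by ring
    rw [hx]
    haveI : Fact (1 < N) := ⟨hN⟩
    exact ZMod.val_one N
  simp only [between]
  omega

def BarP (N : ℕ) [NeZero N] (va v1 : ℕ) (b : ZMod N) (d : ZMod N × ZMod N) : Prop :=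
  ((d.1 - b).val ≤ v1 ∧ v1 < (d.2 - b).val ∧ (d.2 - b).val ≤ va ∧
    ¬((d.1 - b).val = 0 ∧ (d.2 - b).val = va)) ∨
  ((d.2 - b).val ≤ v1 ∧ v1 < (d.1 - b).val ∧ (d.1 - b).val ≤ va ∧
    ¬((d.2 - b).val = 0 ∧ (d.1 - b).val = va))

instance {N : ℕ} [NeZero N] (va v1 : ℕ) (b : ZMod N) (d : ZMod N × ZMod N) :
    Decidable (BarP N va v1 b d) := by
  unfold BarP; infer_instance

end Helpers

section Key

variable {n : ℕ} (D : Finset (ZMod (n + 3) × ZMod (n + 3)))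
  (m : ZMod (n + 3) → ZMod (n + 3) → ℕ)

/-- The diamond vanishes when all four chords cross nothing. -/
lemma key0
    (hpiece : ∀ i j, i ≠ j → (∀ d ∈ D, ¬ Crosses (n + 3) (i, j) d) → m i j = 1)
    (a b i : ZMod (n + 3))
    (h2 : 0 < (i - 1 - b).val) (h3 : (i - b).val = (i - 1 - b).val + 1)
    (h4 : (i - b).val < (a - b).val)
    (hA : ∀ d ∈ D, ¬ Crosses (n + 3) (i - 1, a) d ∧ ¬ Crosses (n + 3) (i - 1, b) d ∧
      ¬ Crosses (n + 3) (i, a) d ∧ ¬ Crosses (n + 3) (i, b) d) :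
    ((m (i - 1) a : ℤ) * m i b - m (i - 1) b * m i a = 0 ∨
     (m (i - 1) a : ℤ) * m i b - m (i - 1) b * m i a = 1) := by
  have hvb : (b - b).val = 0 := by rw [sub_self]; exact ZMod.val_zero
  have hne1 : i - 1 ≠ a := fun h => by
    have := congrArg (fun z => (z - b).val) h; omega
  have hne2 : i - 1 ≠ b := fun h => by
    have := congrArg (fun z => (z - b).val) h; omega
  have hne3 : i ≠ a := fun h => by
    have := congrArg (fun z => (z - b).val) h; omega
  have hne4 : i ≠ b := fun h => by
    have := congrArg (fun z => (z - b).val) h; omega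
  rw [hpiece _ _ hne1 (fun d hd => (hA d hd).1), hpiece _ _ hne2 (fun d hd => (hA d hd).2.1),
    hpiece _ _ hne3 (fun d hd => (hA d hd).2.2.1), hpiece _ _ hne4 (fun d hd => (hA d hd).2.2.2)]
  norm_num

set_option maxHeartbeats 0 in
lemma key_step
    (hdiagonal : ∀ d ∈ D, d.1 ≠ d.2 ∧ d.2 ≠ d.1 + 1 ∧ d.1 ≠ d.2 + 1)
    (hnoncross : ∀ d ∈ D, ∀ d' ∈ D, ¬ Crosses (n + 3) d d')
    (hpiece : ∀ i j, i ≠ j → (∀ d ∈ D, ¬ Crosses (n + 3) (i, j) d) → m i j = 1)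
    (hrec : ∀ i j k l, (k, l) ∈ D → Crosses (n + 3) (i, j) (k, l) →
      (∀ d ∈ D, ¬ Crosses (n + 3) (j, k) d) → (∀ d ∈ D, ¬ Crosses (n + 3) (j, l) d) →
      m i j = m i k + m i l)
    (K : ℕ)
    (ih : ∀ a b i : ZMod (n + 3),
      (∀ d ∈ D, ¬ Crosses (n + 3) (a, b) d) →
      0 < (i - 1 - b).val →
      (i - b).val = (i - 1 - b).val + 1 →
      (i - b).val < (a - b).val →
      (D.filter (fun d => Crosses (n + 3) (i - 1, a) d)).card +
        (D.filter (fun d => Crosses (n + 3) (i - 1, b) d)).card +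
        (D.filter (fun d => Crosses (n + 3) (i, a) d)).card +
        (D.filter (fun d => Crosses (n + 3) (i, b) d)).card ≤ K →
      ((m (i - 1) a : ℤ) * m i b - m (i - 1) b * m i a = 0 ∨
       (m (i - 1) a : ℤ) * m i b - m (i - 1) b * m i a = 1))
    (a b i : ZMod (n + 3))
    (h1 : ∀ d ∈ D, ¬ Crosses (n + 3) (a, b) d)
    (h2 : 0 < (i - 1 - b).val)
    (h3 : (i - b).val = (i - 1 - b).val + 1)
    (h4 : (i - b).val < (a - b).val)
    (hsum : (D.filter (fun d => Crosses (n + 3) (i - 1, a) d)).card +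
      (D.filter (fun d => Crosses (n + 3) (i - 1, b) d)).card +
      (D.filter (fun d => Crosses (n + 3) (i, a) d)).card +
      (D.filter (fun d => Crosses (n + 3) (i, b) d)).card ≤ K + 1) :
    ((m (i - 1) a : ℤ) * m i b - m (i - 1) b * m i a = 0 ∨
     (m (i - 1) a : ℤ) * m i b - m (i - 1) b * m i a = 1) := by
  by_cases hA : ∀ d ∈ D, ¬ Crosses (n + 3) (i - 1, a) d ∧ ¬ Crosses (n + 3) (i - 1, b) d ∧
    ¬ Crosses (n + 3) (i, a) d ∧ ¬ Crosses (n + 3) (i, b) d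
  · exact key0 D m hpiece a b i h2 h3 h4 hA
  have hvb : (b - b).val = 0 := by rw [sub_self]; exact ZMod.val_zero
  have Ba := ZMod.val_lt (a - b)
  have Bi := ZMod.val_lt (i - b)
  have Bi1 := ZMod.val_lt (i - 1 - b)
  -- a chord that crosses something exists
  obtain ⟨d0, hd0, hcr⟩ : ∃ d ∈ D, (Crosses (n + 3) (i - 1, a) d ∨
      Crosses (n + 3) (i - 1, b) d ∨ Crosses (n + 3) (i, a) d ∨ Crosses (n + 3) (i, b) d) := by
    by_contra h
    push_neg at h
    exact hA fun d hd => by have := h d hd; tauto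
  have hbar0 : BarP (n + 3) ((a - b).val) ((i - 1 - b).val) b d0 := by
    have hab := h1 d0 hd0
    obtain ⟨u, w⟩ := d0
    rw [crosses_coord b] at hab
    have Bu := ZMod.val_lt (u - b)
    have Bw := ZMod.val_lt (w - b)
    simp only [between] at hab
    rcases hcr with hc | hc | hc | hc <;>
      rw [crosses_coord b] at hc <;>
      simp only [BarP, between] at hc ⊢ <;> omega
  have hSne : (D.filter (BarP (n + 3) ((a - b).val) ((i - 1 - b).val) b)).Nonempty := ⟨d0, Finset.mem_filter.2 ⟨hd0, hbar0⟩⟩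
  obtain ⟨e, heS, hemax⟩ := Finset.exists_max_image (D.filter (BarP (n + 3) ((a - b).val) ((i - 1 - b).val) b))
    (fun d => max ((d.2 - b).val - (d.1 - b).val) ((d.1 - b).val - (d.2 - b).val)) hSne
  have heD : e ∈ D := (Finset.mem_filter.1 heS).1
  have hebar : BarP (n + 3) ((a - b).val) ((i - 1 - b).val) b e := (Finset.mem_filter.1 heS).2
  obtain ⟨p, q, hpqD, hpqe, hbarC⟩ : ∃ p q : ZMod (n + 3),
      ((p, q) ∈ D ∨ (q, p) ∈ D) ∧ ((e.1 = p ∧ e.2 = q) ∨ (e.1 = q ∧ e.2 = p)) ∧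
      ((p - b).val ≤ (i - 1 - b).val ∧ (i - 1 - b).val < (q - b).val ∧
        (q - b).val ≤ (a - b).val ∧ ¬((p - b).val = 0 ∧ (q - b).val = (a - b).val)) := by
    rw [BarP] at hebar
    rcases hebar with h | h
    · exact ⟨e.1, e.2, Or.inl (by simpa using heD), Or.inl ⟨rfl, rfl⟩, h⟩
    · exact ⟨e.2, e.1, Or.inr (by simpa using heD), Or.inr ⟨rfl, rfl⟩, h⟩
  have Bp := ZMod.val_lt (p - b)
  have Bq := ZMod.val_lt (q - b)
  have hmax : ∀ d ∈ D, BarP (n + 3) ((a - b).val) ((i - 1 - b).val) b d →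
      ((d.2 - b).val - (d.1 - b).val ≤ (q - b).val - (p - b).val ∧
       (d.1 - b).val - (d.2 - b).val ≤ (q - b).val - (p - b).val) := by
    intro d hd hb
    have h' := hemax d (Finset.mem_filter.2 ⟨hd, hb⟩)
    rcases hpqe with ⟨hh1, hh2⟩ | ⟨hh1, hh2⟩ <;> rw [hh1, hh2] at h' <;> omega
  have hNCe : ∀ d ∈ D, ¬ Crosses (n + 3) (p, q) d := by
    intro d hd hc
    rcases hpqD with h | h
    · exact hnoncross (p, q) h d hd hc
    · exact hnoncross (q, p) h d hd ((crosses_symm_pair p q d).mp hc)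
  have hREC : ∀ x j : ZMod (n + 3), Crosses (n + 3) (x, j) (p, q) →
      (∀ d ∈ D, ¬ Crosses (n + 3) (j, p) d) → (∀ d ∈ D, ¬ Crosses (n + 3) (j, q) d) →
      m x j = m x p + m x q := by
    intro x j hc hjp hjq
    rcases hpqD with h | h
    · exact hrec x j p q h hc hjp hjq
    · have := hrec x j q p h ((crosses_symm2 x j p q).mp hc) hjq hjp
      omega
  have hVIS : ∀ d ∈ D, ¬ Crosses (n + 3) (a, p) d ∧ ¬ Crosses (n + 3) (a, q) d ∧
      ¬ Crosses (n + 3) (b, p) d ∧ ¬ Crosses (n + 3) (b, q) d := by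
    intro d hd
    have hab := h1 d hd
    have hed := hNCe d hd
    have hmd := hmax d hd
    obtain ⟨u, w⟩ := d
    have Bu := ZMod.val_lt (u - b)
    have Bw := ZMod.val_lt (w - b)
    rw [crosses_coord b] at hab hed
    rw [crosses_coord b, crosses_coord b, crosses_coord b, crosses_coord b]
    simp only [BarP, between] at hab hed hmd ⊢
    omega
  -- directed versions of the visibility facts
  have hap : ∀ d ∈ D, ¬ Crosses (n + 3) (a, p) d := fun d hd => (hVIS d hd).1
  have haq : ∀ d ∈ D, ¬ Crosses (n + 3) (a, q) d := fun d hd => (hVIS d hd).2.1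
  have hbp : ∀ d ∈ D, ¬ Crosses (n + 3) (b, p) d := fun d hd => (hVIS d hd).2.2.1
  have hbq : ∀ d ∈ D, ¬ Crosses (n + 3) (b, q) d := fun d hd => (hVIS d hd).2.2.2
  have hNlt : (1 : ℕ) < n + 3 := by omega
  have hii : i - 1 + 1 = i := by ring
  have hne_ii1 : i ≠ i - 1 := fun h => by
    have := congrArg (fun z => (z - b).val) h; omega
  have medge1 : m i (i - 1) = 1 := by
    refine hpiece _ _ hne_ii1 (fun d hd hc => ?_)
    have h0 := noncross_edge hNlt (i - 1) d
    rw [hii] at h0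
    exact h0 ((crosses_symm_pair i (i - 1) d).mp hc)
  have medge2 : m (i - 1) i = 1 := by
    refine hpiece _ _ (fun h => hne_ii1 h.symm) (fun d hd hc => ?_)
    have h0 := noncross_edge hNlt (i - 1) d
    rw [hii] at h0
    exact h0 hc
  -- the element of D corresponding to the chord (p, q)
  obtain ⟨eD, heD2, heq⟩ : ∃ e0 ∈ D, ∀ x y : ZMod (n + 3),
      Crosses (n + 3) (x, y) e0 ↔ Crosses (n + 3) (x, y) (p, q) := by
    rcases hpqD with h | h
    · exact ⟨(p, q), h, fun x y => Iff.rfl⟩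
    · exact ⟨(q, p), h, fun x y => crosses_symm2 x y q p⟩
  have hpcase : (p - b).val = 0 ∨ (p - b).val = (i - 1 - b).val ∨
      (0 < (p - b).val ∧ (p - b).val < (i - 1 - b).val) := by omega
  have hqcase : (q - b).val = (i - b).val ∨ (q - b).val = (a - b).val ∨
      ((i - b).val < (q - b).val ∧ (q - b).val < (a - b).val) := by omega
  rcases hpcase with hp | hp | hp <;> rcases hqcase with hq | hq | hq
  · -- P2 ∧ Q1 : p = b, q = i ; diamond is 1
    have hp' : p = b := val_sub_inj b p b (by rw [hvb]; exact hp)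
    have hq' : q = i := val_sub_inj b q i hq
    have hma : m i a = 1 := by
      refine hpiece _ _ (fun h => ?_) (fun d hd hc => haq d hd ?_)
      · have := congrArg (fun z => (z - b).val) h; omega
      · rw [hq']; exact (crosses_symm_pair i a d).mp hc
    have hmb : m i b = 1 := by
      refine hpiece _ _ (fun h => ?_) (fun d hd hc => hNCe d hd ?_)
      · have := congrArg (fun z => (z - b).val) h; omega
      · rw [hp', hq']; exact (crosses_symm_pair i b d).mp hc
    have hcr1 : Crosses (n + 3) (i - 1, a) (p, q) := by
      rw [crosses_coord b]; simp only [between]; omega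
    have hma1 : m (i - 1) a = m (i - 1) p + m (i - 1) q := hREC (i - 1) a hcr1 hap haq
    rw [hp', hq', medge2] at hma1
    right
    rw [hma, hmb, hma1]
    push_cast
    ring
  · -- P2 ∧ Q2 : impossible
    exact absurd ⟨hp, hq⟩ hbarC.2.2.2
  · -- P2 ∧ Q3 : p = b ; recurse with (a, b) := (q, b)
    have hp' : p = b := val_sub_inj b p b (by rw [hvb]; exact hp)
    have hca : Crosses (n + 3) (i, a) (p, q) := by
      rw [crosses_coord b]; simp only [between]; omega
    have hca1 : Crosses (n + 3) (i - 1, a) (p, q) := by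
      rw [crosses_coord b]; simp only [between]; omega
    have hma : m i a = m i p + m i q := hREC i a hca hap haq
    have hma1 : m (i - 1) a = m (i - 1) p + m (i - 1) q := hREC (i - 1) a hca1 hap haq
    rw [hp'] at hma hma1
    have hmono : ∀ z : ZMod (n + 3), 0 < (z - b).val → (z - b).val < (q - b).val →
        ∀ d ∈ D, Crosses (n + 3) (z, q) d → Crosses (n + 3) (z, a) d := by
      intro z hz1 hz2 d hd hc
      have hed := hNCe d hd
      have hab := h1 d hd
      obtain ⟨u, w⟩ := d
      have Bu := ZMod.val_lt (u - b)
      have Bw := ZMod.val_lt (w - b)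
      have Bz := ZMod.val_lt (z - b)
      rw [crosses_coord b] at hc hed hab ⊢
      simp only [between] at hc hed hab ⊢
      rcases hc with ⟨hc1, hc2⟩ | ⟨hc1, hc2⟩ <;>
        rcases hc1 with hc1 | hc1 | hc1 <;> rcases hc2 with hc2 | hc2 | hc2 <;> omega
    have hnoq : ¬ Crosses (n + 3) (i, q) (p, q) := by
      rw [crosses_coord b]; simp only [between]; omega
    have hnoq1 : ¬ Crosses (n + 3) (i - 1, q) (p, q) := by
      rw [crosses_coord b]; simp only [between]; omega
    have hsub : (D.filter (fun d => Crosses (n + 3) (i, q) d)) ⊆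
        (D.filter (fun d => Crosses (n + 3) (i, a) d)) := by
      intro d hd'
      have hd := Finset.mem_filter.1 hd'
      exact Finset.mem_filter.2 ⟨hd.1, hmono i (by omega) (by omega) d hd.1 hd.2⟩
    have hsub1 : (D.filter (fun d => Crosses (n + 3) (i - 1, q) d)) ⊆
        (D.filter (fun d => Crosses (n + 3) (i - 1, a) d)) := by
      intro d hd'
      have hd := Finset.mem_filter.1 hd'
      exact Finset.mem_filter.2 ⟨hd.1, hmono (i - 1) (by omega) (by omega) d hd.1 hd.2⟩
    have hlt : (D.filter (fun d => Crosses (n + 3) (i, q) d)).card <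
        (D.filter (fun d => Crosses (n + 3) (i, a) d)).card :=
      Finset.card_lt_card ((Finset.ssubset_iff_of_subset hsub).2
        ⟨eD, Finset.mem_filter.2 ⟨heD2, (heq i a).2 hca⟩,
          fun hmem => hnoq ((heq i q).1 (Finset.mem_filter.1 hmem).2)⟩)
    have hlt1 : (D.filter (fun d => Crosses (n + 3) (i - 1, q) d)).card <
        (D.filter (fun d => Crosses (n + 3) (i - 1, a) d)).card :=
      Finset.card_lt_card ((Finset.ssubset_iff_of_subset hsub1).2
        ⟨eD, Finset.mem_filter.2 ⟨heD2, (heq (i - 1) a).2 hca1⟩,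
          fun hmem => hnoq1 ((heq (i - 1) q).1 (Finset.mem_filter.1 hmem).2)⟩)
    have h1' : ∀ d ∈ D, ¬ Crosses (n + 3) (q, b) d := by
      intro d hd hc
      refine hNCe d hd ?_
      rw [hp']
      exact (crosses_symm_pair q b d).mp hc
    have hIH := ih q b i h1' h2 h3 (by omega) (by omega)
    rw [hma, hma1]
    rcases hIH with h | h
    · left; push_cast at h ⊢; linear_combination h
    · right; push_cast at h ⊢; linear_combination h
  · -- P1 ∧ Q1 : impossible, (p, q) would be an edge
    have hp' : p = i - 1 := val_sub_inj b p (i - 1) hp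
    have hq' : q = i := val_sub_inj b q i hq
    rcases hpqD with h | h
    · exact absurd (by rw [hq', hp', hii] : (p, q).2 = (p, q).1 + 1) (hdiagonal _ h).2.1
    · exact absurd (by rw [hq', hp', hii] : (q, p).1 = (q, p).2 + 1) (hdiagonal _ h).2.2
  · -- P1 ∧ Q2 : p = i - 1, q = a ; diamond is 1
    have hp' : p = i - 1 := val_sub_inj b p (i - 1) hp
    have hq' : q = a := val_sub_inj b q a hq
    have hma1 : m (i - 1) a = 1 := by
      refine hpiece _ _ (fun h => ?_) (fun d hd hc => hNCe d hd ?_)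
      · have := congrArg (fun z => (z - b).val) h; omega
      · rw [hp', hq']; exact hc
    have hmb1 : m (i - 1) b = 1 := by
      refine hpiece _ _ (fun h => ?_) (fun d hd hc => hbp d hd ?_)
      · have := congrArg (fun z => (z - b).val) h; omega
      · rw [hp']; exact (crosses_symm_pair (i - 1) b d).mp hc
    have hcb : Crosses (n + 3) (i, b) (p, q) := by
      rw [crosses_coord b]; simp only [between]; omega
    have hmb : m i b = m i p + m i q := hREC i b hcb hbp hbq
    rw [hp', hq', medge1] at hmb
    right
    rw [hma1, hmb1, hmb]
    push_cast
    ring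
  · -- P1 ∧ Q3 : p = i - 1 ; diamond is 0
    have hp' : p = i - 1 := val_sub_inj b p (i - 1) hp
    have hma1 : m (i - 1) a = 1 := by
      refine hpiece _ _ (fun h => ?_) (fun d hd hc => hap d hd ?_)
      · have := congrArg (fun z => (z - b).val) h; omega
      · rw [hp']; exact (crosses_symm_pair (i - 1) a d).mp hc
    have hmb1 : m (i - 1) b = 1 := by
      refine hpiece _ _ (fun h => ?_) (fun d hd hc => hbp d hd ?_)
      · have := congrArg (fun z => (z - b).val) h; omega
      · rw [hp']; exact (crosses_symm_pair (i - 1) b d).mp hc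
    have hca : Crosses (n + 3) (i, a) (p, q) := by
      rw [crosses_coord b]; simp only [between]; omega
    have hcb : Crosses (n + 3) (i, b) (p, q) := by
      rw [crosses_coord b]; simp only [between]; omega
    have hma : m i a = m i p + m i q := hREC i a hca hap haq
    have hmb : m i b = m i p + m i q := hREC i b hcb hbp hbq
    rw [hp', medge1] at hma hmb
    left
    rw [hma1, hmb1, hma, hmb]
    push_cast
    ring
  · -- P3 ∧ Q1 : q = i ; diamond is 0
    have hq' : q = i := val_sub_inj b q i hq
    have hma : m i a = 1 := by
      refine hpiece _ _ (fun h => ?_) (fun d hd hc => haq d hd ?_)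
      · have := congrArg (fun z => (z - b).val) h; omega
      · rw [hq']; exact (crosses_symm_pair i a d).mp hc
    have hmb : m i b = 1 := by
      refine hpiece _ _ (fun h => ?_) (fun d hd hc => hbq d hd ?_)
      · have := congrArg (fun z => (z - b).val) h; omega
      · rw [hq']; exact (crosses_symm_pair i b d).mp hc
    have hca1 : Crosses (n + 3) (i - 1, a) (p, q) := by
      rw [crosses_coord b]; simp only [between]; omega
    have hcb1 : Crosses (n + 3) (i - 1, b) (p, q) := by
      rw [crosses_coord b]; simp only [between]; omega
    have hma1 : m (i - 1) a = m (i - 1) p + m (i - 1) q := hREC (i - 1) a hca1 hap haq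
    have hmb1 : m (i - 1) b = m (i - 1) p + m (i - 1) q := hREC (i - 1) b hcb1 hbp hbq
    rw [hq', medge2] at hma1 hmb1
    left
    rw [hma, hmb, hma1, hmb1]
    push_cast
    ring
  · -- P3 ∧ Q2 : q = a ; recurse with (a, b) := (a, p)
    have hq' : q = a := val_sub_inj b q a hq
    have hcb : Crosses (n + 3) (i, b) (p, q) := by
      rw [crosses_coord b]; simp only [between]; omega
    have hcb1 : Crosses (n + 3) (i - 1, b) (p, q) := by
      rw [crosses_coord b]; simp only [between]; omega
    have hmb : m i b = m i p + m i q := hREC i b hcb hbp hbq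
    have hmb1 : m (i - 1) b = m (i - 1) p + m (i - 1) q := hREC (i - 1) b hcb1 hbp hbq
    rw [hq'] at hmb hmb1
    have hmono : ∀ z : ZMod (n + 3), (p - b).val < (z - b).val →
        (z - b).val < (a - b).val →
        ∀ d ∈ D, Crosses (n + 3) (z, p) d → Crosses (n + 3) (z, b) d := by
      intro z hz1 hz2 d hd hc
      have hed := hNCe d hd
      have hab := h1 d hd
      obtain ⟨u, w⟩ := d
      have Bu := ZMod.val_lt (u - b)
      have Bw := ZMod.val_lt (w - b)
      have Bz := ZMod.val_lt (z - b)
      rw [crosses_coord b] at hc hed hab ⊢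
      simp only [between] at hc hed hab ⊢
      rcases hc with ⟨hc1, hc2⟩ | ⟨hc1, hc2⟩ <;>
        rcases hc1 with hc1 | hc1 | hc1 <;> rcases hc2 with hc2 | hc2 | hc2 <;> omega
    have hnop : ¬ Crosses (n + 3) (i, p) (p, q) := by
      rw [crosses_coord b]; simp only [between]; omega
    have hnop1 : ¬ Crosses (n + 3) (i - 1, p) (p, q) := by
      rw [crosses_coord b]; simp only [between]; omega
    have hsub : (D.filter (fun d => Crosses (n + 3) (i, p) d)) ⊆
        (D.filter (fun d => Crosses (n + 3) (i, b) d)) := by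
      intro d hd'
      have hd := Finset.mem_filter.1 hd'
      exact Finset.mem_filter.2 ⟨hd.1, hmono i (by omega) (by omega) d hd.1 hd.2⟩
    have hsub1 : (D.filter (fun d => Crosses (n + 3) (i - 1, p) d)) ⊆
        (D.filter (fun d => Crosses (n + 3) (i - 1, b) d)) := by
      intro d hd'
      have hd := Finset.mem_filter.1 hd'
      exact Finset.mem_filter.2 ⟨hd.1, hmono (i - 1) (by omega) (by omega) d hd.1 hd.2⟩
    have hlt : (D.filter (fun d => Crosses (n + 3) (i, p) d)).card <
        (D.filter (fun d => Crosses (n + 3) (i, b) d)).card :=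
      Finset.card_lt_card ((Finset.ssubset_iff_of_subset hsub).2
        ⟨eD, Finset.mem_filter.2 ⟨heD2, (heq i b).2 hcb⟩,
          fun hmem => hnop ((heq i p).1 (Finset.mem_filter.1 hmem).2)⟩)
    have hlt1 : (D.filter (fun d => Crosses (n + 3) (i - 1, p) d)).card <
        (D.filter (fun d => Crosses (n + 3) (i - 1, b) d)).card :=
      Finset.card_lt_card ((Finset.ssubset_iff_of_subset hsub1).2
        ⟨eD, Finset.mem_filter.2 ⟨heD2, (heq (i - 1) b).2 hcb1⟩,
          fun hmem => hnop1 ((heq (i - 1) p).1 (Finset.mem_filter.1 hmem).2)⟩)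
    have s1 := subval b (i - 1) p
    have s2 := subval b i p
    have s3 := subval b a p
    have hIH := ih a p i hap (by omega) (by omega) (by omega) (by omega)
    rw [hmb, hmb1]
    rcases hIH with h | h
    · left; push_cast at h ⊢; linear_combination h
    · right; push_cast at h ⊢; linear_combination h
  · -- P3 ∧ Q3 : all four chords cross (p, q) ; diamond is 0
    have hca : Crosses (n + 3) (i, a) (p, q) := by
      rw [crosses_coord b]; simp only [between]; omega
    have hcb : Crosses (n + 3) (i, b) (p, q) := by
      rw [crosses_coord b]; simp only [between]; omega
    have hca1 : Crosses (n + 3) (i - 1, a) (p, q) := by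
      rw [crosses_coord b]; simp only [between]; omega
    have hcb1 : Crosses (n + 3) (i - 1, b) (p, q) := by
      rw [crosses_coord b]; simp only [between]; omega
    have hma : m i a = m i p + m i q := hREC i a hca hap haq
    have hmb : m i b = m i p + m i q := hREC i b hcb hbp hbq
    have hma1 : m (i - 1) a = m (i - 1) p + m (i - 1) q := hREC (i - 1) a hca1 hap haq
    have hmb1 : m (i - 1) b = m (i - 1) p + m (i - 1) q := hREC (i - 1) b hcb1 hbp hbq
    left
    rw [hma, hmb, hma1, hmb1]
    push_cast
    ring


set_option maxHeartbeats 1000000 in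
lemma key
    (hdiagonal : ∀ d ∈ D, d.1 ≠ d.2 ∧ d.2 ≠ d.1 + 1 ∧ d.1 ≠ d.2 + 1)
    (hnoncross : ∀ d ∈ D, ∀ d' ∈ D, ¬ Crosses (n + 3) d d')
    (hpiece : ∀ i j, i ≠ j → (∀ d ∈ D, ¬ Crosses (n + 3) (i, j) d) → m i j = 1)
    (hrec : ∀ i j k l, (k, l) ∈ D → Crosses (n + 3) (i, j) (k, l) →
      (∀ d ∈ D, ¬ Crosses (n + 3) (j, k) d) → (∀ d ∈ D, ¬ Crosses (n + 3) (j, l) d) →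
      m i j = m i k + m i l) :
    ∀ K : ℕ, ∀ a b i : ZMod (n + 3),
    (∀ d ∈ D, ¬ Crosses (n + 3) (a, b) d) →
    0 < (i - 1 - b).val →
    (i - b).val = (i - 1 - b).val + 1 →
    (i - b).val < (a - b).val →
    (D.filter (fun d => Crosses (n + 3) (i - 1, a) d)).card +
      (D.filter (fun d => Crosses (n + 3) (i - 1, b) d)).card +
      (D.filter (fun d => Crosses (n + 3) (i, a) d)).card +
      (D.filter (fun d => Crosses (n + 3) (i, b) d)).card ≤ K →
    ((m (i - 1) a : ℤ) * m i b - m (i - 1) b * m i a = 0 ∨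
     (m (i - 1) a : ℤ) * m i b - m (i - 1) b * m i a = 1) := by
  intro K
  induction K with
  | zero =>
    intro a b i h1 h2 h3 h4 hsum
    refine key0 D m hpiece a b i h2 h3 h4 ?_
    intro d hd
    refine ⟨fun hc => ?_, fun hc => ?_, fun hc => ?_, fun hc => ?_⟩
    · have hm : d ∈ D.filter (fun d => Crosses (n + 3) (i - 1, a) d) :=
        Finset.mem_filter.2 ⟨hd, hc⟩
      have := Finset.card_pos.2 ⟨d, hm⟩
      omega
    · have hm : d ∈ D.filter (fun d => Crosses (n + 3) (i - 1, b) d) :=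
        Finset.mem_filter.2 ⟨hd, hc⟩
      have := Finset.card_pos.2 ⟨d, hm⟩
      omega
    · have hm : d ∈ D.filter (fun d => Crosses (n + 3) (i, a) d) :=
        Finset.mem_filter.2 ⟨hd, hc⟩
      have := Finset.card_pos.2 ⟨d, hm⟩
      omega
    · have hm : d ∈ D.filter (fun d => Crosses (n + 3) (i, b) d) :=
        Finset.mem_filter.2 ⟨hd, hc⟩
      have := Finset.card_pos.2 ⟨d, hm⟩
      omega
  | succ K ih =>
    intro a b i h1 h2 h3 h4 hsum
    exact key_step D m hdiagonal hnoncross hpiece hrec K ih a b i h1 h2 h3 h4 hsum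

end Key

/-- For a polygon dissection `D` of the `(n+3)`-gon and the associated
generalised frieze values `m = m_R` (defined by the same inductive rules as in
STATEMENT 13), each diamond difference
`m(i−1,j−1)·m(i,j) − m(i−1,j)·m(i,j−1)` equals `0` or `1`, where a factor `m(a,b)` is
interpreted as `1` if `a` and `b` are equal or neighbouring vertices (the corresponding
object of the cluster category is zero).  Here `(i,j)` runs over the diagonals of the
polygon (`j ∉ {i, i+1, i−1}`), corresponding to the AR triangles
`(i−1,j−1) → (i−1,j) ⊕ (i,j−1) → (i,j)`. -/
theorem stmt_14 (n : ℕ) (D : Finset (ZMod (n + 3) × ZMod (n + 3)))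
    (hdiagonal : ∀ d ∈ D, d.1 ≠ d.2 ∧ d.2 ≠ d.1 + 1 ∧ d.1 ≠ d.2 + 1)
    (hnoncross : ∀ d ∈ D, ∀ d' ∈ D, ¬ Crosses (n + 3) d d')
    (m : ZMod (n + 3) → ZMod (n + 3) → ℕ)
    (hrefl : ∀ i, m i i = 0)
    (hpiece : ∀ i j, i ≠ j → (∀ d ∈ D, ¬ Crosses (n + 3) (i, j) d) → m i j = 1)
    (hrec : ∀ i j k l, (k, l) ∈ D → Crosses (n + 3) (i, j) (k, l) →
      (∀ d ∈ D, ¬ Crosses (n + 3) (j, k) d) → (∀ d ∈ D, ¬ Crosses (n + 3) (j, l) d) →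
      m i j = m i k + m i l)
    (f : ZMod (n + 3) → ZMod (n + 3) → ℤ)
    (hf : ∀ a b, f a b = if a = b ∨ b = a + 1 ∨ a = b + 1 then 1 else (m a b : ℤ)) :
    ∀ i j : ZMod (n + 3), j ≠ i → j ≠ i + 1 → i ≠ j + 1 →
      f (i - 1) (j - 1) * f i j - f (i - 1) j * f i (j - 1) = 0 ∨
      f (i - 1) (j - 1) * f i j - f (i - 1) j * f i (j - 1) = 1 := by
  intro i j hji hji1 hij1
  have hNlt : (1 : ℕ) < n + 3 := by omega
  have hF : ∀ x y : ZMod (n + 3), x ≠ y → f x y = (m x y : ℤ) := by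
    intro x y hxy
    rw [hf]
    split_ifs with h
    · have hm1 : m x y = 1 := by
        rcases h with h | h | h
        · exact absurd h hxy
        · rw [h]
          exact hpiece _ _ (by rw [← h]; exact hxy) (fun d hd => noncross_edge hNlt x d)
        · rw [h]
          refine hpiece _ _ (by rw [← h]; exact hxy) (fun d hd hc => ?_)
          exact noncross_edge hNlt y d ((crosses_symm_pair (y + 1) y d).mp hc)
      rw [hm1]; norm_num
    · rfl
  have hne1 : (i - 1 : ZMod (n + 3)) ≠ j - 1 := fun h => hji (by linear_combination -h)
  have hne2 : i ≠ j := fun h => hji h.symm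
  have hne3 : (i - 1 : ZMod (n + 3)) ≠ j := fun h => hij1 (by linear_combination h)
  have hne4 : i ≠ j - 1 := fun h => hji1 (by linear_combination -h)
  rw [hF _ _ hne1, hF _ _ hne2, hF _ _ hne3, hF _ _ hne4]
  -- invariant facts for applying `key` with a := j - 1, b := j
  have h1 : ∀ d ∈ D, ¬ Crosses (n + 3) ((j - 1 : ZMod (n + 3)), j) d := by
    intro d hd hc
    have h0 := noncross_edge hNlt (j - 1) d
    have hjj : j - 1 + 1 = j := by ring
    rw [hjj] at h0
    exact h0 hc
  have hv0 : (i - 1 - j).val ≠ 0 := fun h => by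
    have : i - 1 - j = 0 := (ZMod.val_eq_zero _).mp h
    exact hij1 (by linear_combination this)
  have hvij : (i - j).val ≠ 0 := fun h => by
    have : i - j = 0 := (ZMod.val_eq_zero _).mp h
    exact hne2 (by linear_combination this)
  have h2 : 0 < (i - 1 - j).val := Nat.pos_of_ne_zero hv0
  have hone : (i - (i - 1)).val = 1 := by
    have hx : i - (i - 1) = 1 := by ring
    rw [hx]
    haveI : Fact (1 < n + 3) := ⟨hNlt⟩
    exact ZMod.val_one _
  have h3 : (i - j).val = (i - 1 - j).val + 1 := by
    have s1 := subval j i (i - 1)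
    rw [hone] at s1
    have B1 := ZMod.val_lt (i - j)
    have B2 := ZMod.val_lt (i - 1 - j)
    omega
  have h4 : (i - j).val < (j - 1 - j).val := by
    have hm1 : j - 1 - j = -1 := by ring
    have hv1 : ((j - 1 - j : ZMod (n + 3))).val = n + 2 := by
      rw [hm1]; exact ZMod.val_neg_one (n + 2)
    have B1 := ZMod.val_lt (i - j)
    have : (i - j).val ≠ n + 2 := fun h => by
      have hcast : (i - j : ZMod (n + 3)) = ((n + 2 : ℕ) : ZMod (n + 3)) := by
        rw [← h, ZMod.natCast_val, ZMod.cast_id]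
      have hneg : ((n + 2 : ℕ) : ZMod (n + 3)) = -1 := by
        have h0 : ((n + 3 : ℕ) : ZMod (n + 3)) = 0 := ZMod.natCast_self _
        push_cast at h0 ⊢
        linear_combination h0
      rw [hneg] at hcast
      exact hji1 (by linear_combination -hcast)
    omega
  exact key D m hdiagonal hnoncross hpiece hrec
    ((D.filter (fun d => Crosses (n + 3) (i - 1, j - 1) d)).card +
      (D.filter (fun d => Crosses (n + 3) (i - 1, j) d)).card +
      (D.filter (fun d => Crosses (n + 3) (i, j - 1) d)).card +
      (D.filter (fun d => Crosses (n + 3) (i, j) d)).card)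
    (j - 1) j i h1 h2 h3 h4 le_rfl
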